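/- Let n ≥ 0, let a : Fin n → F_p, and let r = #{i : a i ≠ 0}. Then the sum over all x : Fin n → F_{p²} of u^{Σ_{i} a_i·N(x_i)} in ℤ[C_p] equals (p²)^{n−r} · Γ_p^r. (This is the diagonalized form of the state-sum computation in the main theorem: a cocycle invariant built from an orthogonally diagonalized Hermitian form with r nonzero diagonal entries and nullity n − r equals Γ_p^r p^{2(n−r)}.) -/

import Mathlib

variable (p : ℕ) [Fact p.Prime] [Fintype (GaloisField p 2)]

theorem normA (x : GaloisField p 2) :
    algebraMap (ZMod p) (GaloisField p 2) (Algebra.norm (ZMod p) x) = x ^ (p + 1) := by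
  classical
  set L := GaloisField p 2
  haveI : CharP L p := by infer_instance
  have hfr : Module.finrank (ZMod p) L = 2 := GaloisField.finrank p (by norm_num)
  have hcardAut : Fintype.card (L ≃ₐ[ZMod p] L) = 2 := by
    rw [← Nat.card_eq_fintype_card, IsGalois.card_aut_eq_finrank, hfr]
  have hcardL : Fintype.card L = p ^ 2 := by
    have := GaloisField.card p 2 (by norm_num)
    rwa [Nat.card_eq_fintype_card] at this
  -- frobenius as AlgEquiv
  have hcomm : ∀ c : ZMod p, frobenius L p (algebraMap (ZMod p) L c) = algebraMap (ZMod p) L c := by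
    intro c
    rw [frobenius_def, ← map_pow, ZMod.pow_card]
  let fh : L →ₐ[ZMod p] L := { frobenius L p with commutes' := hcomm }
  have hbij : Function.Bijective fh :=
    (Finite.injective_iff_bijective).mp (RingHom.injective (frobenius L p))
  let f : L ≃ₐ[ZMod p] L := AlgEquiv.ofBijective fh hbij
  have hf : ∀ y : L, f y = y ^ p := fun y => rfl
  have hfne : f ≠ 1 := by
    intro h
    have hall : ∀ y : L, y ^ p = y := by
      intro y
      have := congrArg (fun g => g y) h
      simpa [hf] using this
    -- all elements are roots of X^p - X
    have hp1 : 1 < p := (Fact.out : p.Prime).one_lt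
    have hP : (Polynomial.X ^ p - Polynomial.X : Polynomial L) ≠ 0 := by
      intro h0
      have hc := congrArg (fun q => Polynomial.coeff q p) h0
      simp only [Polynomial.coeff_sub, Polynomial.coeff_X_pow, Polynomial.coeff_X, Polynomial.coeff_zero, if_pos rfl, if_neg (by omega : ¬ (1 = p))] at hc; simp at hc
    have hsub : (Finset.univ : Finset L) ⊆
        (Polynomial.X ^ p - Polynomial.X : Polynomial L).roots.toFinset := by
      intro y _
      rw [Multiset.mem_toFinset, Polynomial.mem_roots hP]
      exact Polynomial.IsRoot.def.mpr (by simp [hall y])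
    have hle : Fintype.card L ≤ p := by
      calc Fintype.card L = (Finset.univ : Finset L).card := rfl
        _ ≤ _ := Finset.card_le_card hsub
        _ ≤ _ := (Polynomial.X ^ p - Polynomial.X : Polynomial L).roots.toFinset_card_le
        _ ≤ (Polynomial.X ^ p - Polynomial.X : Polynomial L).natDegree :=
            Polynomial.card_roots' _
        _ ≤ p := by
            refine le_trans (Polynomial.natDegree_sub_le _ _) ?_
            simp [Polynomial.natDegree_X_pow]
            omega
    rw [hcardL] at hle
    nlinarith
  have huniv : (Finset.univ : Finset (L ≃ₐ[ZMod p] L)) = {1, f} := by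
    symm
    apply Finset.eq_of_subset_of_card_le (Finset.subset_univ _)
    rw [Finset.card_univ, hcardAut, Finset.card_insert_of_notMem (by simp [Ne.symm hfne]),
      Finset.card_singleton]
  rw [Algebra.norm_eq_prod_automorphisms, huniv, Finset.prod_insert (by simp [Ne.symm hfne]),
    Finset.prod_singleton, hf]
  simp only [AlgEquiv.one_apply]
  ring

theorem fiber_zero :
    (Finset.univ.filter fun x : GaloisField p 2 => Algebra.norm (ZMod p) x = 0) = {0} := by
  classical
  ext x
  simp [Algebra.norm_eq_zero_iff]

theorem fiber_card {c : ZMod p} (hc : c ≠ 0) :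
    (Finset.univ.filter fun x : GaloisField p 2 => Algebra.norm (ZMod p) x = c).card
      = p + 1 := by
  classical
  have hp1 : 1 < p := (Fact.out : p.Prime).one_lt
  have hcardL : Fintype.card (GaloisField p 2) = p ^ 2 := by
    have := GaloisField.card p 2 (by norm_num)
    rwa [Nat.card_eq_fintype_card] at this
  set F : ZMod p → Finset (GaloisField p 2) := fun c => Finset.univ.filter fun x : (GaloisField p 2) => Algebra.norm (ZMod p) x = c with hF
  -- upper bound on fibers
  have hub : ∀ d : ZMod p, d ≠ 0 → (F d).card ≤ p + 1 := by
    intro d hd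
    set Q : Polynomial (GaloisField p 2) := Polynomial.X ^ (p + 1) - Polynomial.C (algebraMap (ZMod p) (GaloisField p 2) d) with hQ
    have hQ0 : Q ≠ 0 := by
      have : Q.natDegree = p + 1 := Polynomial.natDegree_X_pow_sub_C
      intro h0; rw [h0] at this; simp at this
    have hsub : F d ⊆ Q.roots.toFinset := by
      intro x hx
      rw [hF, Finset.mem_filter] at hx
      rw [Multiset.mem_toFinset, Polynomial.mem_roots hQ0]
      have := normA p x
      rw [hx.2] at this
      simp [hQ, Polynomial.IsRoot.def, ← this]
    calc (F d).card ≤ _ := Finset.card_le_card hsub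
      _ ≤ _ := Q.roots.toFinset_card_le
      _ ≤ Q.natDegree := Polynomial.card_roots' _
      _ = p + 1 := Polynomial.natDegree_X_pow_sub_C
  -- total count
  have htot : ∑ d : ZMod p, (F d).card = p ^ 2 := by
    rw [← hcardL, ← Finset.card_univ]
    exact (Finset.card_eq_sum_card_fiberwise (f := fun x : (GaloisField p 2) => Algebra.norm (ZMod p) x)
        (fun x _ => Finset.mem_univ _)).symm
  have hsplit : (F 0).card + ∑ d ∈ Finset.univ.erase (0 : ZMod p), (F d).card
      = ∑ d : ZMod p, (F d).card :=
    Finset.add_sum_erase (Finset.univ : Finset (ZMod p)) (fun d => (F d).card) (Finset.mem_univ 0)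
  have hF0 : (F 0).card = 1 := by
    show (Finset.univ.filter fun x : GaloisField p 2 => Algebra.norm (ZMod p) x = 0).card = 1
    rw [fiber_zero p]; rfl
  have hcards : (Finset.univ.erase (0 : ZMod p)).card = p - 1 := by
    rw [Finset.card_erase_of_mem (Finset.mem_univ _), Finset.card_univ, ZMod.card]
  have hfac : (p - 1) * (p + 1) = p ^ 2 - 1 := by
    obtain ⟨m, rfl⟩ : ∃ m, p = m + 2 := ⟨p - 2, by omega⟩
    have e1 : (m + 2 - 1) * (m + 2 + 1) = (m + 1) * (m + 3) := by norm_num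
    have h2 : (m + 2) ^ 2 = (m + 1) * (m + 3) + 1 := by ring
    rw [e1]
    exact (Nat.sub_eq_of_eq_add h2).symm
  have hsum : ∑ d ∈ Finset.univ.erase (0 : ZMod p), (F d).card = (p - 1) * (p + 1) := by
    rw [hfac]; omega
  suffices hgoal : (F c).card = p + 1 by
    rw [hF] at hgoal; exact hgoal
  by_contra hne
  have hlt : (F c).card < p + 1 := by
    have hle := hub c hc
    have : (F c).card ≠ p + 1 := hne
    omega
  have : ∑ d ∈ Finset.univ.erase (0 : ZMod p), (F d).card
      < ∑ _d ∈ Finset.univ.erase (0 : ZMod p), (p + 1) := by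
    apply Finset.sum_lt_sum
    · intro i hi
      exact hub i (Finset.ne_of_mem_erase hi)
    · exact ⟨c, Finset.mem_erase.mpr ⟨hc, Finset.mem_univ _⟩, hlt⟩
  rw [Finset.sum_const, hcards, smul_eq_mul, hsum] at this
  omega

/-- Let `a : Fin n → 𝔽_p` and let `r = #{i : a i ≠ 0}`. Then the sum over all
`x : Fin n → 𝔽_{p²}` of `u^{Σ_i a_i·N(x_i)}` in `ℤ[C_p]` equals `(p²)^{n−r}·Γ_p^r`. -/
theorem stmt_2 (p : ℕ) [Fact p.Prime] [Fintype (GaloisField p 2)]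
    (u : ZMod p → MonoidAlgebra ℤ (Multiplicative (ZMod p)))
    (hu : ∀ k, u k = MonoidAlgebra.of ℤ (Multiplicative (ZMod p)) (Multiplicative.ofAdd k))
    (Γ : MonoidAlgebra ℤ (Multiplicative (ZMod p)))
    (hΓ : Γ = u 0 + ((p : ℤ) + 1) • ∑ i ∈ Finset.univ.filter (fun i : ZMod p => i ≠ 0), u i)
    (n : ℕ) (a : Fin n → ZMod p)
    (r : ℕ) (hr : r = (Finset.univ.filter (fun i : Fin n => a i ≠ 0)).card) :
    ∑ x : Fin n → GaloisField p 2, u (∑ i, a i * Algebra.norm (ZMod p) (x i)) =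
      ((p : MonoidAlgebra ℤ (Multiplicative (ZMod p))) ^ 2) ^ (n - r) * Γ ^ r := by
  classical
  have hcardL : Fintype.card (GaloisField p 2) = p ^ 2 := by
    have := GaloisField.card p 2 (by norm_num)
    rwa [Nat.card_eq_fintype_card] at this
  have hu0 : u 0 = 1 := by rw [hu]; simp; exact MonoidAlgebra.one_def.symm
  have key : ∀ x : Fin n → GaloisField p 2,
      u (∑ i, a i * Algebra.norm (ZMod p) (x i))
        = ∏ i, u (a i * Algebra.norm (ZMod p) (x i)) := by
    intro x
    simp only [hu]
    rw [ofAdd_sum]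
    exact map_prod (MonoidAlgebra.of ℤ (Multiplicative (ZMod p))) _ _
  have hfact : (∑ x ∈ Fintype.piFinset (fun _ : Fin n => (Finset.univ : Finset (GaloisField p 2))),
        ∏ i, u (a i * Algebra.norm (ZMod p) (x i)))
      = ∏ i, ∑ t ∈ (Finset.univ : Finset (GaloisField p 2)), u (a i * Algebra.norm (ZMod p) t) :=
    (Finset.prod_univ_sum (fun _ : Fin n => (Finset.univ : Finset (GaloisField p 2)))
      (fun i t => u (a i * Algebra.norm (ZMod p) t))).symm
  rw [Fintype.piFinset_univ] at hfact
  rw [Finset.sum_congr rfl (fun x _ => key x), hfact]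
  -- per-index sums
  have hS0 : ∀ i, a i = 0 →
      (∑ t : GaloisField p 2, u (a i * Algebra.norm (ZMod p) t))
        = (p : MonoidAlgebra ℤ (Multiplicative (ZMod p))) ^ 2 := by
    intro i hi
    simp only [hi, zero_mul, hu0]
    rw [Finset.sum_const, Finset.card_univ, hcardL]
    simp
  have hS1 : ∀ i, a i ≠ 0 →
      (∑ t : GaloisField p 2, u (a i * Algebra.norm (ZMod p) t)) = Γ := by
    intro i hb
    set b := a i with hbdef
    have step1 : (∑ t : GaloisField p 2, u (b * Algebra.norm (ZMod p) t))
        = ∑ c : ZMod p, ∑ t ∈ Finset.univ.filter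
            (fun t : GaloisField p 2 => Algebra.norm (ZMod p) t = c), u (b * Algebra.norm (ZMod p) t) :=
      (Finset.sum_fiberwise _ _ _).symm
    have step2 : ∀ c : ZMod p, (∑ t ∈ Finset.univ.filter
            (fun t : GaloisField p 2 => Algebra.norm (ZMod p) t = c), u (b * Algebra.norm (ZMod p) t))
        = (Finset.univ.filter
            (fun t : GaloisField p 2 => Algebra.norm (ZMod p) t = c)).card • u (b * c) := by
      intro c
      rw [Finset.sum_congr rfl (fun t ht => by rw [(Finset.mem_filter.1 ht).2]),
        Finset.sum_const]
    rw [step1, Finset.sum_congr rfl (fun c _ => step2 c),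
      ← Finset.add_sum_erase (Finset.univ : Finset (ZMod p)) _ (Finset.mem_univ 0)]
    have hz : (Finset.univ.filter
        (fun t : GaloisField p 2 => Algebra.norm (ZMod p) t = 0)).card = 1 := by
      rw [fiber_zero p]; rfl
    have hnz : ∀ c ∈ (Finset.univ : Finset (ZMod p)).erase 0,
        ((Finset.univ.filter
          (fun t : GaloisField p 2 => Algebra.norm (ZMod p) t = c)).card • u (b * c))
          = (p + 1) • u (b * c) := by
      intro c hcmem
      rw [fiber_card p (Finset.ne_of_mem_erase hcmem)]
    rw [hz, Finset.sum_congr rfl hnz, ← Finset.smul_sum, one_smul, mul_zero]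
    have reindex : (∑ c ∈ (Finset.univ : Finset (ZMod p)).erase 0, u (b * c))
        = ∑ d ∈ (Finset.univ : Finset (ZMod p)).erase 0, u d := by
      apply Finset.sum_equiv (Equiv.mulLeft₀ b hb)
      · intro c
        simp [mul_ne_zero_iff, hb]
      · intro c _
        rfl
    rw [reindex, hΓ, Finset.filter_ne']
    congr 1
  -- assemble the product
  rw [← Finset.prod_filter_mul_prod_filter_not Finset.univ (fun i : Fin n => a i ≠ 0),
    Finset.prod_congr rfl (fun i hi => hS1 i (Finset.mem_filter.1 hi).2),
    Finset.prod_congr rfl (fun i hi => hS0 i (not_not.1 (Finset.mem_filter.1 hi).2)),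
    Finset.prod_const, Finset.prod_const, ← hr]
  have hcard' : (Finset.univ.filter (fun i : Fin n => ¬ a i ≠ 0)).card = n - r := by
    have h := Finset.card_filter_add_card_filter_not
      (s := (Finset.univ : Finset (Fin n))) (p := fun i : Fin n => a i ≠ 0)
    rw [Finset.card_univ, Fintype.card_fin] at h
    omega
  rw [hcard', mul_comm]
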